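/- Let W⁰,…,W^{n-1} be finite-dimensional ℂ-vector spaces of dimensions w₀,…,w_{n-1}, and let Com(W_*) denote the set of tuples (f₀,…,f_{n-2}) of linear maps f_i : Wⁱ → W^{i+1} with f_{i+1} ∘ f_i = 0 for all 0 ≤ i ≤ n-3, viewed as a subset of the finite-dimensional ℂ-vector space ∏_{i=0}^{n-2} Hom(Wⁱ, W^{i+1}) with its standard topology. Let r, r' ∈ ℕ^{n-1} both satisfy r_{i-1} + r_i ≤ w_i and r'_{i-1} + r'_i ≤ w_i for all 0 ≤ i ≤ n-1 (convention r_{-1} = r_{n-1} = r'_{-1} = r'_{n-1} = 0), and let O(r) = {f ∈ Com(W_*) : rank(f_i) = r_i for all i} and similarly O(r'). Then O(r') is contained in the topological closure of O(r) if and only if r'_i ≤ r_i for all 0 ≤ i ≤ n-2. -/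

import Mathlib

set_option synthInstance.maxHeartbeats 1000000
set_option maxHeartbeats 4000000

open Module Submodule LinearMap Matrix


/-- The variety of complexes: tuples `(f₀,…,f_{n-2})` of linear maps
`f_i : Wⁱ → W^{i+1}` (realized as matrices, with `Wⁱ = ℂ^{wᵢ}`) satisfying
`f_{i+1} ∘ f_i = 0`, inside the product of the Hom-spaces. -/
def ComVariety (n : ℕ) (w : ℕ → ℕ) :
    Set (∀ i : ℕ, Matrix (Fin (w (i + 1))) (Fin (w i)) ℂ) :=
  {f | ∀ i, i + 3 ≤ n → f (i + 1) * f i = 0}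

/-- The stratum `O(r)` of the variety of complexes consisting of complexes with
`rank f_i = r_i` for all `0 ≤ i ≤ n-2`. -/
def ComStratum (n : ℕ) (w r : ℕ → ℕ) :
    Set (∀ i : ℕ, Matrix (Fin (w (i + 1))) (Fin (w i)) ℂ) :=
  {f | f ∈ ComVariety n w ∧ ∀ i, i + 2 ≤ n → (f i).rank = r i}

/-- For admissible rank tuples `r, r'` (i.e. `r_{i-1} + r_i ≤ w_i` for `0 ≤ i ≤ n-1`
with the conventions `r_{-1} = r_{n-1} = 0`, encoded by `hrtop, hadm0, hadm` and the
primed versions), the stratum `O(r')` is contained in the topological closure of the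
stratum `O(r)` iff `r'_i ≤ r_i` for all `0 ≤ i ≤ n-2`. -/
lemma perturb_data {m : ℕ} (R K : Submodule ℂ (Fin m → ℂ)) (hRK : R ≤ K)
    (p q : ℕ) (hdim : finrank ℂ R + (p + q) ≤ finrank ℂ K) :
    ∃ (P : (Fin m → ℂ) →ₗ[ℂ] (Fin p → ℂ)) (B : (Fin q → ℂ) →ₗ[ℂ] (Fin m → ℂ)),
      (∀ x ∈ R, P x = 0) ∧ (∀ c, P (B c) = 0) ∧ (∀ c, B c ∈ K) ∧
      (∀ c, B c ∈ R → c = 0) ∧ (∀ y, ∃ x ∈ K, P x = y) := by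
  obtain ⟨C, hC⟩ := Submodule.exists_isCompl K
  set R' : Submodule ℂ K := R.comap K.subtype with hR'
  obtain ⟨S, hS⟩ := Submodule.exists_isCompl R'
  have hfr : finrank ℂ R' = finrank ℂ R :=
    (Submodule.comapSubtypeEquivOfLe hRK).finrank_eq
  have hfk : finrank ℂ R' + finrank ℂ S = finrank ℂ K := by
    simpa using Submodule.finrank_add_eq_of_isCompl hS
  have hpq : p + q ≤ finrank ℂ S := by omega
  haveI : Module.Free ℂ S := Module.Free.of_divisionRing ℂ S
  set bS := Module.finBasis ℂ S with hbS
  set i1 : Fin p → Fin (finrank ℂ S) := fun k => ⟨(k : ℕ), by omega⟩ with hi1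
  set i2 : Fin q → Fin (finrank ℂ S) := fun k => ⟨p + (k : ℕ), by omega⟩ with hi2
  set projK : (Fin m → ℂ) →ₗ[ℂ] K := K.linearProjOfIsCompl C hC with hprojK
  set projS : K →ₗ[ℂ] S := S.linearProjOfIsCompl R' hS.symm with hprojS
  set coordp : S →ₗ[ℂ] (Fin p → ℂ) := LinearMap.pi (fun k => bS.coord (i1 k)) with hcoordp
  set P : (Fin m → ℂ) →ₗ[ℂ] (Fin p → ℂ) := coordp ∘ₗ projS ∘ₗ projK with hP
  set v : Fin q → (Fin m → ℂ) := fun k => ((bS (i2 k) : K) : Fin m → ℂ) with hv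
  set u : Fin p → (Fin m → ℂ) := fun k => ((bS (i1 k) : K) : Fin m → ℂ) with hu
  set B : (Fin q → ℂ) →ₗ[ℂ] (Fin m → ℂ) := Basis.constr (Pi.basisFun ℂ (Fin q)) ℂ v with hB
  -- projK fixes elements of K
  have hprojK_mem : ∀ (x : Fin m → ℂ) (hx : x ∈ K), projK x = ⟨x, hx⟩ := by
    intro x hx
    exact Submodule.linearProjOfIsCompl_apply_left hC ⟨x, hx⟩
  -- P vanishes on R
  have hPR : ∀ x ∈ R, P x = 0 := by
    intro x hx
    have hxK : x ∈ K := hRK hx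
    have h1 : projK x = ⟨x, hxK⟩ := hprojK_mem x hxK
    have h2 : projS ⟨x, hxK⟩ = 0 :=
      Submodule.projectionOnto_apply_of_mem_right hS.symm (by simpa [hR'] using hx)
    simp [hP, h1, h2]
  -- value of P on v and u
  have hPv : ∀ k, P (v k) = 0 := by
    intro k
    have hmem : v k ∈ K := (bS (i2 k) : K).2
    have h1 : projK (v k) = (bS (i2 k) : K) := by
      rw [hprojK_mem (v k) hmem]
    have h2 : projS ((bS (i2 k) : K)) = bS (i2 k) :=
      Submodule.linearProjOfIsCompl_apply_left hS.symm (bS (i2 k))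
    have h3 : ∀ j, bS.coord (i1 j) (bS (i2 k)) = 0 := by
      intro j
      rw [Basis.coord_apply, Basis.repr_self]
      refine Finsupp.single_eq_of_ne ?_
      intro hcon
      have : (i2 k : ℕ) = (i1 j : ℕ) := by rw [hcon]
      simp [hi1, hi2] at this
      omega
    funext j
    simp [hP, h1, h2, hcoordp, h3 j]
  have hPu : ∀ k, P (u k) = Pi.single k 1 := by
    intro k
    have hmem : u k ∈ K := (bS (i1 k) : K).2
    have h1 : projK (u k) = (bS (i1 k) : K) := by
      rw [hprojK_mem (u k) hmem]
    have h2 : projS ((bS (i1 k) : K)) = bS (i1 k) :=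
      Submodule.linearProjOfIsCompl_apply_left hS.symm (bS (i1 k))
    funext j
    have h3 : bS.coord (i1 j) (bS (i1 k)) = if k = j then 1 else 0 := by
      rw [Basis.coord_apply, Basis.repr_self]
      rcases eq_or_ne k j with h | h
      · subst h; simp
      · rw [Finsupp.single_eq_of_ne, if_neg h]
        intro hcon
        have : (i1 k : ℕ) = (i1 j : ℕ) := by rw [hcon]
        simp [hi1] at this
        exact h (Fin.ext this)
    by_cases hkj : k = j
    · subst hkj; simp [hP, h1, h2, hcoordp, h3]
    · simp [hP, h1, h2, hcoordp, h3, Pi.single_apply, hkj, Ne.symm hkj]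
  have hBv : ∀ k, B (Pi.basisFun ℂ (Fin q) k) = v k := fun k =>
    Basis.constr_basis _ _ _ _
  have hPB : ∀ c, P (B c) = 0 := by
    have : P ∘ₗ B = 0 := by
      apply Basis.ext (Pi.basisFun ℂ (Fin q))
      intro k
      show P (B (Pi.basisFun ℂ (Fin q) k)) = 0
      rw [hBv k]; exact hPv k
    intro c
    have := LinearMap.congr_fun this c
    simpa using this
  have hBK : ∀ c, B c ∈ K := by
    intro c
    have hr : LinearMap.range B ≤ K := by
      rw [hB, Basis.constr_range, Submodule.span_le]
      rintro x ⟨k, rfl⟩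
      exact (bS (i2 k) : K).2
    exact hr ⟨c, rfl⟩
  have hcoordT : ∀ k0 : Fin q,
      (bS.coord (i2 k0)) ∘ₗ (projS ∘ₗ projK ∘ₗ B) = LinearMap.proj k0 := by
    intro k0
    apply Basis.ext (Pi.basisFun ℂ (Fin q))
    intro k
    show bS.coord (i2 k0) (projS (projK (B (Pi.basisFun ℂ (Fin q) k)))) = _
    rw [hBv k, hprojK_mem (v k) (bS (i2 k) : K).2,
      show projS ((bS (i2 k) : K)) = bS (i2 k) from
        Submodule.linearProjOfIsCompl_apply_left hS.symm (bS (i2 k)),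
      Basis.coord_apply, Basis.repr_self]
    by_cases hk : k = k0
    · subst hk; simp
    · rw [Finsupp.single_eq_of_ne (fun hcon => hk (Fin.ext (by
        have : p + (k:ℕ) = p + (k0:ℕ) := by simpa [hi2] using (congrArg Fin.val hcon).symm
        omega)))]
      simp [Pi.basisFun_apply, Pi.single_apply, hk]
  have hBR : ∀ c, B c ∈ R → c = 0 := by
    intro c hc
    have hxK : B c ∈ K := hRK hc
    have h1 : projK (B c) = ⟨B c, hxK⟩ := hprojK_mem _ hxK
    have h2 : projS ⟨B c, hxK⟩ = 0 :=
      Submodule.projectionOnto_apply_of_mem_right hS.symm (by simpa [hR'] using hc)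
    funext k0
    have hco := LinearMap.congr_fun (hcoordT k0) c
    simp only [LinearMap.comp_apply, LinearMap.proj_apply] at hco
    rw [h1, h2] at hco
    simpa using hco.symm
  have hPsurj : ∀ y, ∃ x ∈ K, P x = y := by
    intro y
    refine ⟨∑ k, y k • u k, ?_, ?_⟩
    · exact Submodule.sum_mem _ fun k _ => Submodule.smul_mem _ _ (bS (i1 k) : K).2
    · rw [map_sum]
      simp only [_root_.map_smul]
      funext j
      simp only [Finset.sum_apply, Pi.smul_apply]
      rw [Finset.sum_congr rfl fun k _ => by rw [hPu k]]
      simp [Pi.single_apply]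
  exact ⟨P, B, hPR, hPB, hBK, hBR, hPsurj⟩

lemma eventually_rank_ge {m' m : ℕ} (A : Matrix (Fin m') (Fin m) ℂ) :
    ∀ᶠ B in nhds A, A.rank ≤ B.rank := by
  obtain ⟨s, hs_sub, hs_span, hs_ind⟩ := exists_linearIndependent ℂ (Set.range Aᵀ)
  have hfin : s.Finite := hs_ind.setFinite
  haveI : Fintype s := hfin.fintype
  have hcard : finrank ℂ (span ℂ s) = Fintype.card s := by
    classical
    rw [finrank_span_set_eq_card hs_ind, Set.toFinset_card]
  have hrank : A.rank = Fintype.card s := by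
    rw [Matrix.rank_eq_finrank_span_cols, show Set.range A.col = Set.range Aᵀ from rfl, ← hs_span, hcard]
  obtain ⟨e⟩ : Nonempty (Fin A.rank ≃ s) :=
    ⟨(Fintype.equivFinOfCardEq hrank.symm).symm⟩
  -- choose column indices
  have hsel : ∀ x : s, ∃ j : Fin m, Aᵀ j = (x : Fin m' → ℂ) := fun x => hs_sub x.2
  choose jdx hjdx using hsel
  have hindA : LinearIndependent ℂ (fun l : Fin A.rank => Aᵀ (jdx (e l))) := by
    have : (fun l : Fin A.rank => Aᵀ (jdx (e l))) = (fun x : s => (x : Fin m' → ℂ)) ∘ e := by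
      funext l; simp [hjdx (e l)]
    rw [this]
    exact hs_ind.comp e e.injective
  have hopen : IsOpen {v : Fin A.rank → (Fin m' → ℂ) | LinearIndependent ℂ v} :=
    isOpen_setOf_linearIndependent
  have hcont : Continuous fun (B : Matrix (Fin m') (Fin m) ℂ) =>
      (fun l : Fin A.rank => Bᵀ (jdx (e l))) := by
    refine continuous_pi fun l => continuous_pi fun i' => ?_
    exact (continuous_apply_apply i' (jdx (e l))).comp continuous_id |>.congr (fun B => rfl)
  have hmem : (fun l : Fin A.rank => Aᵀ (jdx (e l))) ∈
      {v : Fin A.rank → (Fin m' → ℂ) | LinearIndependent ℂ v} := hindA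
  have hev := (hopen.preimage hcont).eventually_mem (by exact hmem)
  filter_upwards [hev] with B hB
  have hBind : LinearIndependent ℂ (fun l : Fin A.rank => Bᵀ (jdx (e l))) := hB
  have h1 : finrank ℂ (span ℂ (Set.range fun l : Fin A.rank => Bᵀ (jdx (e l)))) = A.rank := by
    rw [finrank_span_eq_card hBind, Fintype.card_fin]
  have h2 : span ℂ (Set.range fun l : Fin A.rank => Bᵀ (jdx (e l))) ≤
      span ℂ (Set.range Bᵀ) := by
    apply span_mono
    rintro x ⟨l, rfl⟩
    exact ⟨jdx (e l), rfl⟩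
  calc A.rank = _ := h1.symm
    _ ≤ finrank ℂ (span ℂ (Set.range Bᵀ)) := Submodule.finrank_mono h2
    _ = B.rank := (Matrix.rank_eq_finrank_span_cols B).symm

lemma construct (n : ℕ) (w r r' : ℕ → ℕ)
    (hadm0 : r 0 ≤ w 0)
    (hadm : ∀ i, 1 ≤ i → i ≤ n - 1 → r (i - 1) + r i ≤ w i)
    (hle : ∀ i, i + 2 ≤ n → r' i ≤ r i)
    (f : ∀ i : ℕ, Matrix (Fin (w (i + 1))) (Fin (w i)) ℂ)
    (hf : f ∈ ComStratum n w r') :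
    ∃ g : ∀ i : ℕ, Matrix (Fin (w (i + 1))) (Fin (w i)) ℂ,
      ∀ t : ℂ, t ≠ 0 → (fun i => f i + t • g i) ∈ ComStratum n w r := by
  obtain ⟨hcplx, hrank⟩ := hf
  let F : ∀ i, (Fin (w i) → ℂ) →ₗ[ℂ] (Fin (w (i + 1)) → ℂ) := fun i => Matrix.toLin' (f i)
  let p : ℕ → ℕ := fun j => if j + 2 ≤ n then r j - r' j else 0
  let q : ℕ → ℕ := fun j => match j with
    | 0 => 0
    | Nat.succ j' => p j'
  let RR : ∀ j, Submodule ℂ (Fin (w j) → ℂ) := fun j =>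
    match j with
    | 0 => ⊥
    | Nat.succ j' => LinearMap.range (F j')
  let KK : ∀ j, Submodule ℂ (Fin (w j) → ℂ) := fun j =>
    if j + 2 ≤ n then LinearMap.ker (F j) else ⊤
  have hrankF : ∀ i, i + 2 ≤ n → finrank ℂ (LinearMap.range (F i)) = r' i := by
    intro i hi
    rw [← hrank i hi]
    rfl
  have hnull : ∀ i, i + 2 ≤ n → r' i + finrank ℂ (LinearMap.ker (F i)) = w i := by
    intro i hi
    have h := LinearMap.finrank_range_add_finrank_ker (F i)
    rw [hrankF i hi, Module.finrank_fin_fun] at h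
    exact h
  have hcplxF : ∀ i, i + 3 ≤ n → ∀ x, F (i + 1) (F i x) = 0 := by
    intro i hi x
    have h0 : (F (i + 1)).comp (F i) = 0 := by
      have h1 : Matrix.toLin' (f (i + 1) * f i) = (F (i + 1)).comp (F i) :=
        Matrix.toLin'_mul _ _
      rw [hcplx i hi, map_zero] at h1
      exact h1.symm
    have h3 := LinearMap.congr_fun h0 x
    simpa only [LinearMap.comp_apply, LinearMap.zero_apply] using h3
  have hRK : ∀ j, j + 1 ≤ n → RR j ≤ KK j := by
    intro j hj
    match j with
    | 0 => exact bot_le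
    | Nat.succ j' =>
      show LinearMap.range (F j') ≤ KK (j' + 1)
      by_cases hj2 : j' + 3 ≤ n
      · have hk : KK (j' + 1) = LinearMap.ker (F (j' + 1)) := if_pos (by omega)
        rw [hk]
        rintro x ⟨y, rfl⟩
        exact LinearMap.mem_ker.2 (hcplxF j' hj2 y)
      · have hk : KK (j' + 1) = ⊤ := if_neg (by omega)
        rw [hk]
        exact le_top
  have key : ∀ j, ∃ (P : (Fin (w j) → ℂ) →ₗ[ℂ] (Fin (p j) → ℂ))
      (B : (Fin (q j) → ℂ) →ₗ[ℂ] (Fin (w j) → ℂ)),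
      j + 1 ≤ n →
      ((∀ x ∈ RR j, P x = 0) ∧ (∀ c, P (B c) = 0) ∧ (∀ c, B c ∈ KK j) ∧
        (∀ c, B c ∈ RR j → c = 0) ∧ (∀ y, ∃ x ∈ KK j, P x = y)) := by
    intro j
    by_cases hj : j + 1 ≤ n
    · have hdim : finrank ℂ (RR j) + (p j + q j) ≤ finrank ℂ (KK j) := by
        match j, hj with
        | 0, hj =>
          have hR0 : finrank ℂ (RR 0) = 0 := by
            show finrank ℂ (⊥ : Submodule ℂ (Fin (w 0) → ℂ)) = 0
            exact finrank_bot ℂ _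
          have hq0 : q 0 = 0 := rfl
          by_cases h2 : 0 + 2 ≤ n
          · have hp0 : p 0 = r 0 - r' 0 := if_pos h2
            have hK0 : KK 0 = LinearMap.ker (F 0) := if_pos h2
            have hKfin : r' 0 + finrank ℂ (KK 0) = w 0 := by
              rw [hK0]; exact hnull 0 h2
            have := hle 0 h2
            rw [hR0, hq0, hp0]
            omega
          · have hp0 : p 0 = 0 := if_neg h2
            rw [hR0, hq0, hp0]
            omega
        | Nat.succ j', hj =>
          show finrank ℂ (RR (j' + 1)) + (p (j' + 1) + q (j' + 1)) ≤ finrank ℂ (KK (j' + 1))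
          have hj'2 : j' + 2 ≤ n := by omega
          have hRj : finrank ℂ (RR (j' + 1)) = r' j' := hrankF j' hj'2
          have hqj : q (j' + 1) = r j' - r' j' := if_pos hj'2
          have hlej' := hle j' hj'2
          have hadmj : r j' + r (j' + 1) ≤ w (j' + 1) := by
            have := hadm (j' + 1) (by omega) (by omega)
            simpa using this
          by_cases h2 : j' + 1 + 2 ≤ n
          · have hpj : p (j' + 1) = r (j' + 1) - r' (j' + 1) := if_pos h2
            have hKj : KK (j' + 1) = LinearMap.ker (F (j' + 1)) := if_pos h2
            have hKfin : r' (j' + 1) + finrank ℂ (KK (j' + 1)) = w (j' + 1) := by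
              rw [hKj]; exact hnull (j' + 1) h2
            have := hle (j' + 1) h2
            rw [hRj, hqj, hpj]
            omega
          · have hpj : p (j' + 1) = 0 := if_neg h2
            have hKj : KK (j' + 1) = ⊤ := if_neg h2
            have hKtop : finrank ℂ (KK (j' + 1)) = w (j' + 1) := by
              rw [hKj]
              rw [finrank_top, Module.finrank_fin_fun]
            rw [hRj, hqj, hpj, hKtop]
            omega
      obtain ⟨P, B, h1, h2, h3, h4, h5⟩ :=
        perturb_data (RR j) (KK j) (hRK j hj) (p j) (q j) hdim
      exact ⟨P, B, fun _ => ⟨h1, h2, h3, h4, h5⟩⟩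
    · exact ⟨0, 0, fun h => absurd h hj⟩
  choose P B hPB using key
  let glin : ∀ i, (Fin (w i) → ℂ) →ₗ[ℂ] (Fin (w (i + 1)) → ℂ) := fun i =>
    if i + 2 ≤ n then (B (i + 1)).comp (P i) else 0
  refine ⟨fun i => LinearMap.toMatrix' (glin i), ?_⟩
  intro t ht
  have htoLin : ∀ i, Matrix.toLin' (LinearMap.toMatrix' (glin i)) = glin i := fun i =>
    Matrix.toLin'_toMatrix' _
  constructor
  · -- complex condition
    intro i hi3
    have hi2 : i + 2 ≤ n := by omega
    have hgl_i : glin i = (B (i + 1)).comp (P i) := if_pos hi2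
    have hgl_i1 : glin (i + 1) = (B (i + 2)).comp (P (i + 1)) := if_pos (by omega)
    have hprops := hPB (i + 1) (by omega)
    have hKK1 : KK (i + 1) = LinearMap.ker (F (i + 1)) := if_pos (by omega)
    have e0 : f (i + 1) * f i = 0 := hcplx i hi3
    have e1 : f (i + 1) * LinearMap.toMatrix' (glin i) = 0 := by
      apply Matrix.toLin'.injective
      rw [Matrix.toLin'_mul, map_zero]
      apply LinearMap.ext
      intro x
      have hm : (B (i + 1)) ((P i) x) ∈ KK (i + 1) := hprops.2.2.1 _
      rw [hKK1] at hm
      simp only [LinearMap.comp_apply, LinearMap.zero_apply]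
      rw [htoLin i, hgl_i]
      exact LinearMap.mem_ker.1 hm
    have e2 : LinearMap.toMatrix' (glin (i + 1)) * f i = 0 := by
      apply Matrix.toLin'.injective
      rw [Matrix.toLin'_mul, map_zero]
      apply LinearMap.ext
      intro x
      simp only [LinearMap.comp_apply, LinearMap.zero_apply]
      rw [htoLin (i + 1), hgl_i1]
      have hm : F i x ∈ RR (i + 1) := ⟨x, rfl⟩
      have := hprops.1 _ hm
      simp only [LinearMap.comp_apply]
      rw [this, map_zero]
    have e3 : LinearMap.toMatrix' (glin (i + 1)) * LinearMap.toMatrix' (glin i) = 0 := by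
      apply Matrix.toLin'.injective
      rw [Matrix.toLin'_mul, map_zero]
      apply LinearMap.ext
      intro x
      simp only [LinearMap.comp_apply, LinearMap.zero_apply]
      rw [htoLin (i + 1), htoLin i, hgl_i1, hgl_i]
      simp only [LinearMap.comp_apply]
      rw [hprops.2.1 ((P i) x), map_zero]
    show (f (i + 1) + t • LinearMap.toMatrix' (glin (i + 1))) *
        (f i + t • LinearMap.toMatrix' (glin i)) = 0
    simp only [Matrix.add_mul, Matrix.mul_add, Matrix.smul_mul, Matrix.mul_smul,
      e0, e1, e2, e3, smul_zero, add_zero, zero_add]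
  · -- rank condition
    intro i hi2
    have hgl_i : glin i = (B (i + 1)).comp (P i) := if_pos hi2
    have hKKi : KK i = LinearMap.ker (F i) := if_pos hi2
    have hprops_i := hPB i (by omega)
    have hprops_i1 := hPB (i + 1) (by omega)
    have hTlin : Matrix.toLin' (f i + t • LinearMap.toMatrix' (glin i)) = F i + t • glin i := by
      rw [map_add, _root_.map_smul, htoLin i]
    have hker : LinearMap.ker (F i + t • glin i) =
        LinearMap.ker (F i) ⊓ LinearMap.ker (P i) := by
      apply le_antisymm
      · intro x hx
        have hx' : F i x + t • (B (i + 1)) ((P i) x) = 0 := by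
          have := LinearMap.mem_ker.1 hx
          simpa [hgl_i] using this
        have heq : (B (i + 1)) (t • (P i) x) = -(F i x) := by
          rw [_root_.map_smul]
          exact eq_neg_of_add_eq_zero_right hx'
        have hmem : (B (i + 1)) (t • (P i) x) ∈ RR (i + 1) := by
          rw [heq]
          exact Submodule.neg_mem _ ⟨x, rfl⟩
        have hc0 : t • (P i) x = 0 := hprops_i1.2.2.2.1 _ hmem
        have hPx : (P i) x = 0 := by
          rcases smul_eq_zero.1 hc0 with h | h
          · exact absurd h ht
          · exact h
        have hFx : F i x = 0 := by
          have : (B (i + 1)) ((P i) x) = 0 := by rw [hPx, map_zero]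
          rw [this, smul_zero, add_zero] at hx'
          exact hx'
        exact Submodule.mem_inf.2 ⟨LinearMap.mem_ker.2 hFx, LinearMap.mem_ker.2 hPx⟩
      · intro x hx
        obtain ⟨hx1, hx2⟩ := Submodule.mem_inf.1 hx
        have h1 := LinearMap.mem_ker.1 hx1
        have h2 := LinearMap.mem_ker.1 hx2
        apply LinearMap.mem_ker.2
        simp [hgl_i, h1, h2]
    set L := (P i).domRestrict (LinearMap.ker (F i)) with hL
    have hLsurj : LinearMap.range L = ⊤ := by
      rw [LinearMap.range_eq_top]
      intro y
      obtain ⟨x, hxK, hPx⟩ := hprops_i.2.2.2.2 y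
      rw [hKKi] at hxK
      exact ⟨⟨x, hxK⟩, hPx⟩
    have hLker : LinearMap.ker L =
        (LinearMap.ker (F i) ⊓ LinearMap.ker (P i)).comap (LinearMap.ker (F i)).subtype := by
      ext x
      simp [hL, LinearMap.mem_ker, Submodule.mem_comap, x.2]
    have hd1 : finrank ℂ (LinearMap.ker L) =
        finrank ℂ ↥(LinearMap.ker (F i) ⊓ LinearMap.ker (P i)) := by
      rw [hLker]
      exact (Submodule.comapSubtypeEquivOfLe inf_le_left).finrank_eq
    have hd2 : p i + finrank ℂ ↥(LinearMap.ker (F i) ⊓ LinearMap.ker (P i)) =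
        finrank ℂ ↥(LinearMap.ker (F i)) := by
      have h := LinearMap.finrank_range_add_finrank_ker L
      rw [hLsurj, finrank_top, Module.finrank_fin_fun, hd1] at h
      exact h
    have h2 := LinearMap.finrank_range_add_finrank_ker (F i + t • glin i)
    rw [hker, Module.finrank_fin_fun] at h2
    have hnulli := hnull i hi2
    have hpi : p i = r i - r' i := if_pos hi2
    have hlei := hle i hi2
    show (f i + t • LinearMap.toMatrix' (glin i)).rank = r i
    have hrw : (f i + t • LinearMap.toMatrix' (glin i)).rank =
        finrank ℂ (LinearMap.range (F i + t • glin i)) := by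
      rw [← hTlin, Matrix.toLin'_apply']
      rfl
    rw [hrw]
    omega

theorem stratum_subset_closure_iff (n : ℕ) (hn : 1 ≤ n) (w r r' : ℕ → ℕ)
    (hrtop : r (n - 1) = 0) (hadm0 : r 0 ≤ w 0)
    (hadm : ∀ i, 1 ≤ i → i ≤ n - 1 → r (i - 1) + r i ≤ w i)
    (hrtop' : r' (n - 1) = 0) (hadm0' : r' 0 ≤ w 0)
    (hadm' : ∀ i, 1 ≤ i → i ≤ n - 1 → r' (i - 1) + r' i ≤ w i) :
    ComStratum n w r' ⊆ closure (ComStratum n w r) ↔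
      ∀ i, i + 2 ≤ n → r' i ≤ r i := by
  constructor
  · intro hsub i hi2
    have hzero : (fun _ => (0 : Matrix _ _ ℂ)) ∈ ComStratum n w (fun _ => 0) := by
      constructor
      · intro j hj
        simp
      · intro j hj
        simp
    obtain ⟨g, hg⟩ := construct n w r' (fun _ => 0) hadm0' hadm'
      (fun i _ => Nat.zero_le _) _ hzero
    have hx : (fun i => (0 : Matrix (Fin (w (i + 1))) (Fin (w i)) ℂ) + (1 : ℂ) • g i)
        ∈ ComStratum n w r' := hg 1 one_ne_zero
    set x : ∀ i : ℕ, Matrix (Fin (w (i + 1))) (Fin (w i)) ℂ :=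
      fun i => (0 : Matrix (Fin (w (i + 1))) (Fin (w i)) ℂ) + (1 : ℂ) • g i with hxdef
    have hxc : x ∈ closure (ComStratum n w r) := hsub hx
    have hev := eventually_rank_ge (x i)
    have hev2 : ∀ᶠ y in nhds x, (x i).rank ≤ (y i).rank := by
      have hc : Continuous fun (y : ∀ j : ℕ, Matrix (Fin (w (j + 1))) (Fin (w j)) ℂ) => y i :=
        continuous_apply i
      exact (hc.tendsto x).eventually hev
    obtain ⟨y, hy1, hy2⟩ := mem_closure_iff_nhds.1 hxc _ hev2
    have hyr : (y i).rank = r i := hy2.2 i hi2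
    have hxr : (x i).rank = r' i := hx.2 i hi2
    have h6 : (x i).rank ≤ (y i).rank := hy1
    rw [hxr, hyr] at h6
    exact h6
  · intro hle f hf
    obtain ⟨g, hg⟩ := construct n w r r' hadm0 hadm hle f hf
    have hcont : Continuous fun t : ℂ =>
        (fun i => f i + t • g i : ∀ i : ℕ, Matrix (Fin (w (i + 1))) (Fin (w i)) ℂ) := by
      refine continuous_pi fun i => ?_
      exact continuous_const.add (continuous_id.smul continuous_const)
    have hne : (nhdsWithin (0 : ℂ) {(0 : ℂ)}ᶜ).NeBot := inferInstance
    have htend : Filter.Tendsto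
        (fun t : ℂ => (fun i => f i + t • g i : ∀ i : ℕ, Matrix (Fin (w (i + 1))) (Fin (w i)) ℂ))
        (nhdsWithin (0 : ℂ) {(0 : ℂ)}ᶜ) (nhds f) := by
      have h0 : (fun i => f i + (0 : ℂ) • g i :
          ∀ i : ℕ, Matrix (Fin (w (i + 1))) (Fin (w i)) ℂ) = f := by
        funext i
        simp
      have := hcont.tendsto 0
      rw [h0] at this
      exact this.mono_left nhdsWithin_le_nhds
    refine mem_closure_of_tendsto htend ?_
    filter_upwards [self_mem_nhdsWithin] with t ht
    exact hg t ht
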